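/- For all integers k ≥ 1 and M ≥ 1, T^{(M)}(x), defined by the recursion T^{(1)}(x) = 0 and T^{(M)}(x) = T^{(M−1)}(x) + x_M · Σ_{v ∈ U^{M−1}} C(k; (1, v_1, …, v_{M−1})) · x_1^{v_1} ⋯ x_{M−1}^{v_{M−1}}, equals the sum of C(k; u) · x_1^{u_1} ⋯ x_M^{u_M} over all vectors u = (u_1, …, u_M) of nonnegative integers with u_1 + … + u_M ≤ k, with Σ_{r odd} u_r even, and for which there exists c ∈ {1, …, M} with u_c = 1, u_r = 0 for all c < r ≤ M, and c > Σ_{r=1}^{c−1} r·u_r. -/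

import Mathlib

open Finset MvPolynomial

/-- The multinomial coefficient `C(k; u) = k! / ((k - ∑ u_r)! ∏ u_r!)`,
taken to be `0` when `∑ u_r > k`.  Index `r : Fin N` represents coordinate `r+1`. -/
def multCoeff (k : ℕ) {N : ℕ} (u : Fin N → ℕ) : ℕ :=
  if ∑ r, u r ≤ k then
    Nat.factorial k / (Nat.factorial (k - ∑ r, u r) * ∏ r, Nat.factorial (u r))
  else 0

/-- `Ufin m` is the set `U^m` of nonnegative integer vectors `v = (v_1, …, v_m)`
(with `M = m + 1`) satisfying `∑_{r=1}^{m} r v_r < m + 1` and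
`∑_{r odd} v_r + (m+1)` even.  (Each `v_r ≤ m` automatically.) -/
def Ufin (m : ℕ) : Finset (Fin m → ℕ) :=
  (Fintype.piFinset fun _ : Fin m => Finset.range (m + 1)) |>.filter
    (fun v : Fin m → ℕ => (∑ r : Fin m, ((r : ℕ) + 1) * v r) < m + 1 ∧
      Even ((∑ r ∈ Finset.univ.filter (fun r : Fin m => Odd ((r : ℕ) + 1)), v r) + (m + 1)))

/-- `Tpoly k M` is `T^{(M)}(x)`, defined by the recursion `T^{(1)}(x) = 0` and
`T^{(M)}(x) = T^{(M-1)}(x) + x_M ∑_{v ∈ U^{M-1}} C(k; (1, v_1, …, v_{M-1}))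
x_1^{v_1} ⋯ x_{M-1}^{v_{M-1}}`.  Variable `x_r` is represented by `X (r - 1)`
in `MvPolynomial ℕ ℝ`. -/
noncomputable def Tpoly (k : ℕ) : ℕ → MvPolynomial ℕ ℝ
  | 0 => 0
  | 1 => 0
  | (m + 2) =>
      Tpoly k (m + 1) +
        MvPolynomial.X (m + 1) *
          ∑ v ∈ Ufin (m + 1),
            MvPolynomial.C (multCoeff k (Fin.cons 1 v) : ℝ) *
              ∏ r : Fin (m + 1), MvPolynomial.X (r : ℕ) ^ v r

/- ## auxiliary lemmas -/


lemma snoc_oddsum (m : ℕ) (v : Fin (m+1) → ℕ) (a : ℕ) :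
    ∑ r ∈ univ.filter (fun r : Fin (m+2) => Odd ((r:ℕ)+1)), (Fin.snoc v a : Fin (m+2) → ℕ) r
      = (∑ r ∈ univ.filter (fun r : Fin (m+1) => Odd ((r:ℕ)+1)), v r)
        + (if Odd (m+2) then a else 0) := by
  rw [Finset.sum_filter, Finset.sum_filter, Fin.sum_univ_castSucc]
  simp

lemma snoc_total (m : ℕ) (v : Fin (m+1) → ℕ) (a : ℕ) :
    ∑ r, (Fin.snoc v a : Fin (m+2) → ℕ) r = (∑ r, v r) + a := by
  rw [Fin.sum_univ_castSucc]; simp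

lemma snoc_wsum_last (m : ℕ) (v : Fin (m+1) → ℕ) (a : ℕ) :
    ∑ r ∈ univ.filter (fun r : Fin (m+2) => r < Fin.last (m+1)),
        ((r:ℕ)+1) * (Fin.snoc v a : Fin (m+2) → ℕ) r = ∑ r : Fin (m+1), ((r:ℕ)+1) * v r := by
  rw [Finset.sum_filter, Fin.sum_univ_castSucc]
  simp [Fin.castSucc_lt_last]

lemma snoc_wsum_castSucc (m : ℕ) (u' : Fin (m+1) → ℕ) (a : ℕ) (c : Fin (m+1)) :
    ∑ r ∈ univ.filter (fun r : Fin (m+2) => r < Fin.castSucc c),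
        ((r:ℕ)+1) * (Fin.snoc u' a : Fin (m+2) → ℕ) r
      = ∑ r ∈ univ.filter (fun r : Fin (m+1) => r < c), ((r:ℕ)+1) * u' r := by
  rw [Finset.sum_filter, Finset.sum_filter, Fin.sum_univ_castSucc]
  simp [Fin.castSucc_lt_castSucc_iff, (Fin.castSucc_lt_last c).not_gt]

lemma snoc_prodX (m : ℕ) (v : Fin (m+1) → ℕ) (a : ℕ) :
    (∏ r : Fin (m+2), MvPolynomial.X (r:ℕ) ^ (Fin.snoc v a : Fin (m+2) → ℕ) r
        : MvPolynomial ℕ ℝ)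
      = (∏ r : Fin (m+1), MvPolynomial.X (r:ℕ) ^ v r) * MvPolynomial.X (m+1) ^ a := by
  rw [Fin.prod_univ_castSucc]; simp

lemma multCoeff_snoc_zero (k m : ℕ) (v : Fin (m+1) → ℕ) :
    multCoeff k (Fin.snoc v 0 : Fin (m+2) → ℕ) = multCoeff k v := by
  have hs : ∑ r, (Fin.snoc v 0 : Fin (m+2) → ℕ) r = ∑ r, v r := by
    rw [snoc_total, Nat.add_zero]
  have hp : ∏ r : Fin (m+2), Nat.factorial ((Fin.snoc v 0 : Fin (m+2) → ℕ) r)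
      = ∏ r, Nat.factorial (v r) := by
    rw [Fin.prod_univ_castSucc]; simp
  unfold multCoeff
  rw [hs, hp]

lemma multCoeff_snoc_one (k m : ℕ) (v : Fin (m+1) → ℕ) :
    multCoeff k (Fin.snoc v 1 : Fin (m+2) → ℕ)
      = multCoeff k (Fin.cons 1 v : Fin (m+2) → ℕ) := by
  have hs : ∑ r, (Fin.snoc v 1 : Fin (m+2) → ℕ) r
      = ∑ r, (Fin.cons 1 v : Fin (m+2) → ℕ) r := by
    rw [snoc_total, Fin.sum_cons]; omega
  have hp : ∏ r : Fin (m+2), Nat.factorial ((Fin.snoc v 1 : Fin (m+2) → ℕ) r)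
      = ∏ r : Fin (m+2), Nat.factorial ((Fin.cons 1 v : Fin (m+2) → ℕ) r) := by
    rw [Fin.prod_univ_castSucc]
    conv_rhs => rw [Fin.prod_univ_succ]
    simp [Nat.mul_comm]
  unfold multCoeff
  rw [hs, hp]

/-- For `k, M ≥ 1`, `T^{(M)}(x)` equals the sum of
`C(k; u) x_1^{u_1} ⋯ x_M^{u_M}` over all nonnegative integer vectors `u` with
`∑ u_r ≤ k`, `∑_{r odd} u_r` even, and for which there exists `c ∈ {1, …, M}`
with `u_c = 1`, `u_r = 0` for `c < r ≤ M`, and `c > ∑_{r=1}^{c-1} r u_r`. -/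
theorem stmt_1 (k M : ℕ) (hk : 1 ≤ k) (hM : 1 ≤ M) :
    Tpoly k M =
      ∑ u ∈ (Fintype.piFinset fun _ : Fin M => Finset.range (k + 1)) |>.filter
          (fun u : Fin M → ℕ => ∑ r, u r ≤ k ∧
            Even (∑ r ∈ Finset.univ.filter (fun r : Fin M => Odd ((r : ℕ) + 1)), u r) ∧
            ∃ c : Fin M, u c = 1 ∧ (∀ r : Fin M, c < r → u r = 0) ∧
              (∑ r ∈ Finset.univ.filter (fun r : Fin M => r < c), ((r : ℕ) + 1) * u r) < (c : ℕ) + 1),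
        MvPolynomial.C (multCoeff k u : ℝ) * ∏ r : Fin M, MvPolynomial.X (r : ℕ) ^ u r := by
  induction M, hM using Nat.le_induction with
  | base =>
    rw [Tpoly]
    symm
    apply Finset.sum_eq_zero
    intro u hu
    exfalso
    rw [Finset.mem_filter] at hu
    obtain ⟨-, -, heven, c, hc1, -, -⟩ := hu
    have hc : c = 0 := Subsingleton.elim _ _
    rw [hc] at hc1
    have h0 : (∑ r ∈ Finset.univ.filter (fun r : Fin 1 => Odd ((r : ℕ) + 1)), u r) = u 0 := by
      rw [Finset.sum_filter, Fin.sum_univ_one]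
      norm_num
    rw [h0, hc1] at heven
    simp at heven
  | succ M hM1 ih =>
    obtain ⟨m, rfl⟩ : ∃ m, M = m + 1 := ⟨M - 1, by omega⟩
    rw [Tpoly, ih]
    rw [← Finset.sum_filter_add_sum_filter_not
        ((Fintype.piFinset fun _ : Fin (m+1+1) => Finset.range (k + 1)) |>.filter _)
        (fun u : Fin (m+1+1) → ℕ => u (Fin.last (m+1)) = 1), add_comm]
    congr 1
    · -- part B : new terms, u (last) = 1
      rw [Finset.mul_sum]
      rw [← Finset.sum_filter_of_ne
        (p := fun v : Fin (m+1) → ℕ => (∑ r, v r) + 1 ≤ k)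
        (by
          intro v _ hne
          by_contra hgt
          apply hne
          have h0 : multCoeff k (Fin.cons 1 v : Fin (m+2) → ℕ) = 0 := by
            unfold multCoeff
            rw [Fin.sum_cons, if_neg (by omega)]
          rw [h0]
          simp)]
      apply Finset.sum_nbij' (fun v : Fin (m+1) → ℕ => (Fin.snoc v 1 : Fin (m+2) → ℕ))
        (fun u : Fin (m+2) → ℕ => u ∘ Fin.castSucc)
      · -- forward membership
        intro v hv
        simp only [Ufin, Finset.mem_filter, Fintype.mem_piFinset] at hv
        obtain ⟨⟨-, hw, hpar⟩, hk'⟩ := hv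
        simp only [Finset.mem_filter, Fintype.mem_piFinset]
        refine ⟨⟨fun r => ?_, ?_, ?_, Fin.last (m+1), ?_, ?_, ?_⟩, ?_⟩
        · refine Fin.lastCases ?_ (fun i => ?_) r
          · simp only [Fin.snoc_last, Finset.mem_range]; omega
          · simp only [Fin.snoc_castSucc, Finset.mem_range]
            have := Finset.single_le_sum (f := v) (fun i _ => Nat.zero_le _)
              (Finset.mem_univ i)
            omega
        · rw [snoc_total]; omega
        · rw [snoc_oddsum]
          have hpar' := Nat.even_iff.mp hpar
          rw [Nat.even_iff]
          by_cases h : Odd (m+2)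
          · rw [if_pos h]
            have h2 := Nat.odd_iff.mp h
            omega
          · rw [if_neg h]
            have h2 := Nat.even_iff.mp (Nat.not_odd_iff_even.mp h)
            omega
        · simp
        · intro r hr
          exact absurd hr (Fin.le_last r).not_gt
        · rw [snoc_wsum_last, Fin.val_last]
          exact hw
        · simp
      · -- backward membership
        intro u hu
        simp only [Finset.mem_filter, Fintype.mem_piFinset] at hu
        obtain ⟨⟨hrange, hsum, heven, c, hc1, hc0, hcw⟩, hlast⟩ := hu
        have hceq : c = Fin.last (m+1) := by
          by_contra h
          have : u (Fin.last (m+1)) = 0 :=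
            hc0 _ (lt_of_le_of_ne (Fin.le_last c) h)
          omega
        have huq : u = (Fin.snoc (u ∘ Fin.castSucc) 1 : Fin (m+2) → ℕ) := by
          funext r
          refine Fin.lastCases ?_ (fun i => ?_) r
          · rw [Fin.snoc_last, hlast]
          · rw [Fin.snoc_castSucc]; rfl
        rw [hceq] at hcw
        rw [huq, snoc_wsum_last] at hcw
        rw [huq, snoc_oddsum] at heven
        rw [huq, snoc_total] at hsum
        simp only [Ufin, Finset.mem_filter, Fintype.mem_piFinset]
        rw [Fin.val_last] at hcw
        refine ⟨⟨fun r => ?_, hcw, ?_⟩, hsum⟩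
        · rw [Finset.mem_range]
          have h1 : ((r:ℕ)+1) * (u ∘ Fin.castSucc) r ≤
              ∑ s : Fin (m+1), ((s:ℕ)+1) * (u ∘ Fin.castSucc) s :=
            Finset.single_le_sum
              (f := fun s : Fin (m+1) => ((s:ℕ)+1) * (u ∘ Fin.castSucc) s)
              (fun i _ => Nat.zero_le _) (Finset.mem_univ r)
          have h2 : (u ∘ Fin.castSucc) r ≤ ((r:ℕ)+1) * (u ∘ Fin.castSucc) r :=
            Nat.le_mul_of_pos_left _ (Nat.succ_pos _)
          omega
        · rw [Nat.even_iff]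
          by_cases h : Odd (m+2)
          · rw [if_pos h] at heven
            have h1 := Nat.even_iff.mp heven
            have h2 := Nat.odd_iff.mp h
            omega
          · rw [if_neg h] at heven
            have h1 := Nat.even_iff.mp heven
            have h2 := Nat.even_iff.mp (Nat.not_odd_iff_even.mp h)
            omega
      · intro v hv
        funext r
        simp
      · intro u hu
        simp only [Finset.mem_filter, Fintype.mem_piFinset] at hu
        obtain ⟨⟨hrange, hsum, heven, c, hc1, hc0, hcw⟩, hlast⟩ := hu
        funext r
        refine Fin.lastCases ?_ (fun i => ?_) r
        · rw [Fin.snoc_last, hlast]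
        · rw [Fin.snoc_castSucc]; rfl
      · intro v hv
        rw [multCoeff_snoc_one, snoc_prodX]
        ring
    · -- part A : old terms, u (last) ≠ 1
      apply Finset.sum_nbij' (fun u' : Fin (m+1) → ℕ => (Fin.snoc u' 0 : Fin (m+2) → ℕ))
        (fun u : Fin (m+2) → ℕ => u ∘ Fin.castSucc)
      · -- forward membership
        intro u' hu'
        simp only [Finset.mem_filter, Fintype.mem_piFinset] at hu'
        obtain ⟨hrange, hsum, heven, c, hc1, hc0, hcw⟩ := hu'
        simp only [Finset.mem_filter, Fintype.mem_piFinset]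
        refine ⟨⟨fun r => ?_, ?_, ?_, Fin.castSucc c, ?_, ?_, ?_⟩, ?_⟩
        · refine Fin.lastCases ?_ (fun i => ?_) r
          · simp
          · simpa using hrange i
        · rw [snoc_total]; omega
        · rw [snoc_oddsum]
          simpa using heven
        · simpa using hc1
        · intro r
          refine Fin.lastCases ?_ (fun i => ?_) r
          · intro _; rw [Fin.snoc_last]
          · intro hi
            rw [Fin.snoc_castSucc]
            exact hc0 i (Fin.castSucc_lt_castSucc_iff.mp hi)
        · rw [snoc_wsum_castSucc]
          simpa using hcw
        · simp
      · -- backward membership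
        intro u hu
        simp only [Finset.mem_filter, Fintype.mem_piFinset] at hu
        obtain ⟨⟨hrange, hsum, heven, c, hc1, hc0, hcw⟩, hlast⟩ := hu
        have hcne : c ≠ Fin.last (m+1) := by
          intro h; rw [h] at hc1; exact hlast hc1
        have hclt : c < Fin.last (m+1) := lt_of_le_of_ne (Fin.le_last c) hcne
        have hul0 : u (Fin.last (m+1)) = 0 := hc0 _ hclt
        have huq : u = (Fin.snoc (u ∘ Fin.castSucc) 0 : Fin (m+2) → ℕ) := by
          funext r
          refine Fin.lastCases ?_ (fun i => ?_) r
          · rw [Fin.snoc_last, hul0]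
          · rw [Fin.snoc_castSucc]; rfl
        set c' : Fin (m+1) := ⟨(c : ℕ), by simpa [Fin.lt_def] using hclt⟩ with hc'
        have hcc : c = Fin.castSucc c' := by
          ext; simp [hc']
        simp only [Finset.mem_filter, Fintype.mem_piFinset]
        refine ⟨fun r => hrange _, ?_, ?_, c', ?_, ?_, ?_⟩
        · rw [huq, snoc_total] at hsum; omega
        · rw [huq, snoc_oddsum] at heven
          simpa using heven
        · rw [hcc] at hc1; exact hc1
        · intro r hr
          have : Fin.castSucc c' < Fin.castSucc r := Fin.castSucc_lt_castSucc_iff.mpr hr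
          rw [← hcc] at this
          exact hc0 _ this
        · rw [hcc, huq, snoc_wsum_castSucc] at hcw
          simpa [hc'] using hcw
      · intro u' hu'
        funext r
        simp
      · intro u hu
        simp only [Finset.mem_filter, Fintype.mem_piFinset] at hu
        obtain ⟨⟨hrange, hsum, heven, c, hc1, hc0, hcw⟩, hlast⟩ := hu
        have hcne : c ≠ Fin.last (m+1) := by
          intro h; rw [h] at hc1; exact hlast hc1
        have hclt : c < Fin.last (m+1) := lt_of_le_of_ne (Fin.le_last c) hcne
        have hul0 : u (Fin.last (m+1)) = 0 := hc0 _ hclt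
        funext r
        refine Fin.lastCases ?_ (fun i => ?_) r
        · rw [Fin.snoc_last, hul0]
        · rw [Fin.snoc_castSucc]; rfl
      · intro u' hu'
        rw [multCoeff_snoc_zero, snoc_prodX]
        ring
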